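/- Let (x,y) be a global solution of the dynamical system (dyn), fix (x*, y*) ∈ Ω, and assume s > max{0, p−2}. Then there exists t₄ ≥ t₀ such that the energy function E satisfies E'(t) ≤ ((α−1)c/2)·t^{q+s−p}·(‖x*‖² + ‖y*‖²) for all t ≥ t₄. -/

import Mathlib

open Real Set Filter MeasureTheory
open scoped RealInnerProductSpace

noncomputable section

abbrev Euc (n : ℕ) : Type := EuclideanSpace ℝ (Fin n)

/-- The Lagrangian `L(x,y) = f(x) + ⟨Kx, y⟩ − g(y)`. -/
def Lag {n m : ℕ} (f : Euc n → ℝ) (g : Euc m → ℝ) (K : Euc n →L[ℝ] Euc m)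
    (x : Euc n) (y : Euc m) : ℝ :=
  f x + ⟪K x, y⟫ - g y

/-- The augmented Lagrangian `L_t(x,y) = L(x,y) + (c/(2 t^p)) (‖x‖² − ‖y‖²)`. -/
def LagT {n m : ℕ} (f : Euc n → ℝ) (g : Euc m → ℝ) (K : Euc n →L[ℝ] Euc m)
    (c p : ℝ) (t : ℝ) (x : Euc n) (y : Euc m) : ℝ :=
  Lag f g K x y + (c / (2 * t ^ p)) * (‖x‖ ^ 2 - ‖y‖ ^ 2)

/-- `∇_x L_t(x,y) = ∇f(x) + K* y + (c/t^p) x`. -/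
def gradLx {n m : ℕ} (f : Euc n → ℝ) (K : Euc n →L[ℝ] Euc m)
    (c p : ℝ) (t : ℝ) (x : Euc n) (y : Euc m) : Euc n :=
  gradient f x + (ContinuousLinearMap.adjoint K) y + (c / t ^ p) • x

/-- `∇_y L_t(x,y) = −∇g(y) + K x − (c/t^p) y`. -/
def gradLy {n m : ℕ} (g : Euc m → ℝ) (K : Euc n →L[ℝ] Euc m)
    (c p : ℝ) (t : ℝ) (x : Euc n) (y : Euc m) : Euc m :=
  -(gradient g y) + K x - (c / t ^ p) • y

/-- The extrapolation coefficient `θ(t)`. -/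
def theta (α q γ s t : ℝ) : ℝ :=
  (t ^ (2*q+s) - 2*γ*q * t ^ (2*q-1) + γ * t ^ q) /
    ((α - 1) * (t ^ (q+s) - γ*q * t ^ (q-1)))

/-- `(xs, ys)` is a saddle point of `L`. -/
def IsSaddle {n m : ℕ} (L : Euc n → Euc m → ℝ) (xs : Euc n) (ys : Euc m) : Prop :=
  ∀ x : Euc n, ∀ y : Euc m, L xs y ≤ L xs ys ∧ L xs ys ≤ L x ys

/-- A global solution of the dynamical system (dyn), recorded together with its first and
second derivatives `x', y', x'', y''` and the derivatives `Gx', Gy'` of the Hessian-driven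
damping terms `t ↦ ∇_x L_t(x(t), y(t)+θ(t) y'(t))` and `t ↦ ∇_y L_t(x(t)+θ(t) x'(t), y(t))`. -/
structure IsDynSol {n m : ℕ} (f : Euc n → ℝ) (g : Euc m → ℝ) (K : Euc n →L[ℝ] Euc m)
    (c p α q γ s t₀ : ℝ) (x : ℝ → Euc n) (y : ℝ → Euc m)
    (x' x'' Gx' : ℝ → Euc n) (y' y'' Gy' : ℝ → Euc m) : Prop where
  hx' : ∀ t ≥ t₀, HasDerivAt x (x' t) t
  hy' : ∀ t ≥ t₀, HasDerivAt y (y' t) t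
  hx'' : ∀ t ≥ t₀, HasDerivAt x' (x'' t) t
  hy'' : ∀ t ≥ t₀, HasDerivAt y' (y'' t) t
  hx''c : ContinuousOn x'' (Ici t₀)
  hy''c : ContinuousOn y'' (Ici t₀)
  hGx' : ∀ t ≥ t₀, HasDerivAt
    (fun τ => gradLx f K c p τ (x τ) (y τ + theta α q γ s τ • y' τ)) (Gx' t) t
  hGy' : ∀ t ≥ t₀, HasDerivAt
    (fun τ => gradLy g K c p τ (x τ + theta α q γ s τ • x' τ) (y τ)) (Gy' t) t
  heqx : ∀ t ≥ t₀, x'' t + (α / t ^ q) • x' t + γ • Gx' t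
      + t ^ s • gradLx f K c p t (x t) (y t + theta α q γ s t • y' t) = 0
  heqy : ∀ t ≥ t₀, y'' t + (α / t ^ q) • y' t - γ • Gy' t
      - t ^ s • gradLy g K c p t (x t + theta α q γ s t • x' t) (y t) = 0

/-- The coefficient `a(t)`. -/
def aFun (α q γ s t : ℝ) : ℝ :=
  (2*q+s) * t ^ (2*q+s-1) - 2*γ*q*(2*q-1) * t ^ (2*q-2) + γ*q * t ^ (q-1)
    + (α-1) * (γ*q * t ^ (q-1) - t ^ (q+s))

/-- The coefficient `l(t)` (depending on the constant `M`). -/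
def lFun (α q c γ s p M t : ℝ) : ℝ :=
  M*(α-1)*(3*α-2)/2 * t ^ (-q) + (α-1)*c*γ/8 * t ^ (-p)
    - M*(α-1)*q/2 * t ^ (-1 : ℝ) - (α-1)*c/4 * t ^ (q+s-p)
    + (α-1)*c*γ*q/4 * t ^ (q-1-p) - (α-1)*q*c/(8*α) * t ^ (2*q+s-1-p)
    + (α-1)*q*(1-q)/2 * t ^ (q-2)

/-- `Δ(t) = ‖∇_x L_t(x(t), y(t)+θ(t)ẏ(t))‖² + ‖∇_y L_t(x(t)+θ(t)ẋ(t), y(t))‖²`. -/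
def DeltaFun {n m : ℕ} (f : Euc n → ℝ) (g : Euc m → ℝ) (K : Euc n →L[ℝ] Euc m)
    (c p α q γ s : ℝ) (x x' : ℝ → Euc n) (y y' : ℝ → Euc m) (t : ℝ) : ℝ :=
  ‖gradLx f K c p t (x t) (y t + theta α q γ s t • y' t)‖ ^ 2
    + ‖gradLy g K c p t (x t + theta α q γ s t • x' t) (y t)‖ ^ 2

/-- The energy function `Ê(t)` of Lemma 4.1, built from the saddle points `(x_t, y_t)` of the
augmented Lagrangians. -/
def Ehat {n m : ℕ} (f : Euc n → ℝ) (g : Euc m → ℝ) (K : Euc n →L[ℝ] Euc m)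
    (c p α q γ s : ℝ) (xt x x' : ℝ → Euc n) (yt y y' : ℝ → Euc m) (t : ℝ) : ℝ :=
  (t ^ (2*q+s) - 2*γ*q * t ^ (2*q-1) + γ * t ^ q) *
      (LagT f g K c p t (x t) (yt t) - LagT f g K c p t (xt t) (y t))
    + (1/2) * ‖(α-1) • (x t - xt t)
        + t ^ q • (x' t + γ • gradLx f K c p t (x t) (y t + theta α q γ s t • y' t))‖ ^ 2
    + (α-1)/2 * (1 - q * t ^ (q-1)) * ‖x t - xt t‖ ^ 2
    + (1/2) * ‖(α-1) • (y t - yt t)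
        + t ^ q • (y' t - γ • gradLy g K c p t (x t + theta α q γ s t • x' t) (y t))‖ ^ 2
    + (α-1)/2 * (1 - q * t ^ (q-1)) * ‖y t - yt t‖ ^ 2

/-- The energy function `E(t)` of Theorem 3.1, built from a fixed saddle point `(xs, ys)` of `L`. -/
def Efun {n m : ℕ} (f : Euc n → ℝ) (g : Euc m → ℝ) (K : Euc n →L[ℝ] Euc m)
    (c p α q γ s : ℝ) (xs : Euc n) (ys : Euc m)
    (x x' : ℝ → Euc n) (y y' : ℝ → Euc m) (t : ℝ) : ℝ :=
  (t ^ (2*q+s) - 2*γ*q * t ^ (2*q-1) + γ * t ^ q) *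
      (Lag f g K (x t) ys - Lag f g K xs (y t) + c / (2 * t ^ p) * (‖x t‖ ^ 2 + ‖y t‖ ^ 2))
    + (1/2) * ‖(α-1) • (x t - xs)
        + t ^ q • (x' t + γ • gradLx f K c p t (x t) (y t + theta α q γ s t • y' t))‖ ^ 2
    + (α-1)/2 * (1 - q * t ^ (q-1)) * ‖x t - xs‖ ^ 2
    + (1/2) * ‖(α-1) • (y t - ys)
        + t ^ q • (y' t - γ • gradLy g K c p t (x t + theta α q γ s t • x' t) (y t))‖ ^ 2
    + (α-1)/2 * (1 - q * t ^ (q-1)) * ‖y t - ys‖ ^ 2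


lemma aux_ev (c₁ : ℝ) {e₁ e₀ ε : ℝ} (h : e₁ < e₀) (hε : 0 < ε) :
    ∀ᶠ t : ℝ in Filter.atTop, c₁ * t ^ e₁ ≤ ε * t ^ e₀ := by
  have h1 : Filter.Tendsto (fun t : ℝ => c₁ * t ^ (e₁ - e₀)) Filter.atTop (nhds (c₁ * 0)) := by
    have := (tendsto_rpow_neg_atTop (y := e₀ - e₁) (by linarith)).const_mul c₁
    simpa [neg_sub] using this
  rw [mul_zero] at h1
  filter_upwards [h1.eventually_lt_const hε, Filter.eventually_ge_atTop (1:ℝ)] with t h2 h3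
  have ht : (0:ℝ) < t := lt_of_lt_of_le one_pos h3
  calc c₁ * t ^ e₁ = (c₁ * t ^ (e₁ - e₀)) * t ^ e₀ := by
        rw [mul_assoc, ← Real.rpow_add ht, sub_add_cancel]
    _ ≤ ε * t ^ e₀ := mul_le_mul_of_nonneg_right h2.le (Real.rpow_nonneg ht.le _)

lemma grad_ineq {n : ℕ} {f : Euc n → ℝ} (hf : ContDiff ℝ 2 f)
    (hfc : ConvexOn ℝ Set.univ f) (a b : Euc n) :
    f a + ⟪gradient f a, b - a⟫ ≤ f b := by
  set φ : ℝ → ℝ := f ∘ (AffineMap.lineMap a b) with hφ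
  have hconv : ConvexOn ℝ Set.univ φ := by
    simpa using hfc.comp_affineMap (AffineMap.lineMap a b)
  have hline : ∀ r : ℝ, HasDerivAt (fun r : ℝ => (AffineMap.lineMap a b) r) (b - a) r := by
    intro r
    have h1 : HasDerivAt (fun r : ℝ => (1 - r) • a + r • b) ((-1 : ℝ) • a + b) r := by
      have ha : HasDerivAt (fun r : ℝ => (1 - r)) (-1 : ℝ) r := by
        simpa using (hasDerivAt_id r).const_sub 1
      simpa using (ha.smul_const a).fun_add ((hasDerivAt_id r).smul_const b)
    have h2 : HasDerivAt (fun r : ℝ => (1 - r) • a + r • b) (b - a) r := by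
      convert h1 using 1; module
    refine h2.congr_of_eventuallyEq (Filter.Eventually.of_forall fun z => ?_)
    simp only [AffineMap.lineMap_apply_module]
  have hd : HasDerivAt φ ⟪gradient f a, b - a⟫ 0 := by
    have hg : HasGradientAt f (gradient f a) a :=
      (hf.differentiable two_ne_zero).differentiableAt.hasGradientAt
    have hg' : HasFDerivAt f ((InnerProductSpace.toDual ℝ (Euc n)) (gradient f a))
        ((AffineMap.lineMap a b : ℝ →ᵃ[ℝ] Euc n) 0) := by
      rw [AffineMap.lineMap_apply_zero]; exact hg.hasFDerivAt
    have := hg'.comp_hasDerivAt 0 (hline 0)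
    simpa [InnerProductSpace.toDual_apply_apply, hφ, Function.comp] using this
  have hsl := hconv.le_slope_of_hasDerivAt (Set.mem_univ 0) (Set.mem_univ 1) one_pos hd
  have h01 : slope φ 0 1 = f b - f a := by
    rw [slope_def_field]
    simp [hφ, AffineMap.lineMap_apply_zero, AffineMap.lineMap_apply_one]
  rw [h01] at hsl
  linarith

lemma hasDerivAt_norm_sq {k : ℕ} {w : ℝ → Euc k} {dw : Euc k} {t : ℝ}
    (hw : HasDerivAt w dw t) : HasDerivAt (fun τ => ‖w τ‖ ^ 2) (2 * ⟪w t, dw⟫) t := by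
  have h1 := hw.inner ℝ hw
  have h2 : (fun τ => (⟪w τ, w τ⟫ : ℝ)) = fun τ => ‖w τ‖ ^ 2 :=
    funext fun τ => real_inner_self_eq_norm_sq _
  rw [h2] at h1
  have h3 : (⟪w t, dw⟫ + ⟪dw, w t⟫ : ℝ) = 2 * ⟪w t, dw⟫ := by
    rw [real_inner_comm dw (w t)]; ring
  rw [h3] at h1; exact h1

lemma grad_comp_deriv {k : ℕ} {f : Euc k → ℝ} (hf : ContDiff ℝ 2 f)
    {w : ℝ → Euc k} {dw : Euc k} {t : ℝ} (hw : HasDerivAt w dw t) :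
    HasDerivAt (fun τ => f (w τ)) ⟪gradient f (w t), dw⟫ t := by
  have hg : HasGradientAt f (gradient f (w t)) (w t) :=
    (hf.differentiable two_ne_zero).differentiableAt.hasGradientAt
  have := hg.hasFDerivAt.comp_hasDerivAt t hw
  simpa [InnerProductSpace.toDual_apply_apply, Function.comp_def] using this

lemma clm_comp_deriv {k l : ℕ} (K : Euc k →L[ℝ] Euc l)
    {w : ℝ → Euc k} {dw : Euc k} {t : ℝ} (hw : HasDerivAt w dw t) :
    HasDerivAt (fun τ => K (w τ)) (K dw) t :=
  K.hasFDerivAt.comp_hasDerivAt t hw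
set_option maxHeartbeats 4000000 in
/-- the derivative bound for the energy `E` of Theorem 3.1. -/
theorem stmt14
    {n m : ℕ}
    (f : Euc n → ℝ) (g : Euc m → ℝ) (K : Euc n →L[ℝ] Euc m)
    (hf : ContDiff ℝ 2 f) (hg : ContDiff ℝ 2 g)
    (hfc : ConvexOn ℝ Set.univ f) (hgc : ConvexOn ℝ Set.univ g)
    (hΩ : ∃ z : Euc n × Euc m, IsSaddle (Lag f g K) z.1 z.2)
    (c p α q γ s t₀ : ℝ)
    (hc : 0 < c) (hp : 0 < p) (hα : 1 < α) (hq0 : 0 < q) (hq1 : q < 1)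
    (hγ : 0 < γ) (hs : 0 < s) (ht₀ : (γ * q) ^ (1 / (s + 1)) < t₀)
    (x : ℝ → Euc n) (y : ℝ → Euc m)
    (x' x'' Gx' : ℝ → Euc n) (y' y'' Gy' : ℝ → Euc m)
    (hsol : IsDynSol f g K c p α q γ s t₀ x y x' x'' Gx' y' y'' Gy')
    (xs : Euc n) (ys : Euc m) (hsad : IsSaddle (Lag f g K) xs ys)
    (hsge : s > max 0 (p - 2))
    (E' : ℝ → ℝ)
    (hE' : ∀ t ≥ t₀, HasDerivAt (Efun f g K c p α q γ s xs ys x x' y y') (E' t) t) :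
    ∃ t₄ ≥ t₀, ∀ t ≥ t₄,
      E' t ≤ (α - 1) * c / 2 * t ^ (q+s-p) * (‖xs‖ ^ 2 + ‖ys‖ ^ 2) := by
  have hα1 : (0:ℝ) < α - 1 := by linarith
  have hps : p - 2 < s := lt_of_le_of_lt (le_max_right 0 (p-2)) hsge
  have hc1 : ∀ᶠ t : ℝ in Filter.atTop,
      (2*q+s)*t^(2*q+s-1) - 2*γ*q*((2*q-1)*t^(2*q-1-1)) + γ*(q*t^(q-1))
        ≤ (α-1)*(t^(q+s) - γ*q*t^(q-1)) := by
    have e1 := aux_ev (2*q+s) (show 2*q+s-1 < q+s by linarith)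
      (show (0:ℝ) < (α-1)/4 by linarith)
    have e2 := aux_ev (-(2*γ*q*(2*q-1))) (show 2*q-1-1 < q+s by linarith)
      (show (0:ℝ) < (α-1)/4 by linarith)
    have e3 := aux_ev (γ*q) (show q-1 < q+s by linarith)
      (show (0:ℝ) < (α-1)/4 by linarith)
    have e4 := aux_ev ((α-1)*(γ*q)) (show q-1 < q+s by linarith)
      (show (0:ℝ) < (α-1)/4 by linarith)
    filter_upwards [e1, e2, e3, e4] with t h1 h2 h3 h4
    nlinarith [h1, h2, h3, h4]
  have hc2 : ∀ᶠ t : ℝ in Filter.atTop, 2*γ*q*t^(2*q-1) ≤ (1/2)*t^(2*q+s) :=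
    aux_ev _ (by linarith) (by norm_num)
  have hc3a : ∀ᶠ t : ℝ in Filter.atTop, q*(1-q)*t^(q-2) ≤ (c/2)*t^(q+s-p) :=
    aux_ev _ (by linarith) (by linarith)
  have hc3b : ∀ᶠ t : ℝ in Filter.atTop, c*γ*q*t^(q-1-p) ≤ (c/2)*t^(q+s-p) :=
    aux_ev _ (by linarith) (by linarith)
  have hc5 : ∀ᶠ t : ℝ in Filter.atTop, γ*q*t^(q-1) ≤ (1/2)*t^(q+s) :=
    aux_ev _ (by linarith) (by norm_num)
  obtain ⟨t₁, ht₁⟩ := Filter.eventually_atTop.mp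
    ((((hc1.and hc2).and (hc3a.and hc3b)).and hc5).and (Filter.eventually_ge_atTop (1:ℝ)))
  refine ⟨max t₀ t₁, le_max_left _ _, fun t ht => ?_⟩
  have htt₀ : t₀ ≤ t := le_trans (le_max_left _ _) ht
  obtain ⟨⟨⟨⟨cond1, cond2⟩, ⟨cond3a, cond3b⟩⟩, cond5⟩, ht1⟩ := ht₁ t (le_trans (le_max_right _ _) ht)
  have ht0 : (0:ℝ) < t := lt_of_lt_of_le one_pos ht1
  -- derivative facts
  have hxd := hsol.hx' t htt₀
  have hyd := hsol.hy' t htt₀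
  have hxd2 := hsol.hx'' t htt₀
  have hyd2 := hsol.hy'' t htt₀
  have hGx := hsol.hGx' t htt₀
  have hGy := hsol.hGy' t htt₀
  have hrp : ∀ e : ℝ, HasDerivAt (fun τ : ℝ => τ ^ e) (e * t ^ (e-1)) t :=
    fun e => Real.hasDerivAt_rpow_const (Or.inl ht0.ne')
  have hA : HasDerivAt (fun τ : ℝ => τ^(2*q+s) - 2*γ*q*τ^(2*q-1) + γ*τ^q)
      ((2*q+s)*t^(2*q+s-1) - (2*γ*q)*((2*q-1)*t^(2*q-1-1)) + γ*(q*t^(q-1))) t :=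
    (((hrp _).sub ((hrp _).const_mul (2*γ*q))).add ((hrp _).const_mul γ))
  have hLag1 : HasDerivAt (fun τ => Lag f g K (x τ) ys)
      (⟪gradient f (x t), x' t⟫ + ⟪K (x' t), ys⟫) t := by
    have h1 := (grad_comp_deriv hf hxd).add
      ((clm_comp_deriv K hxd).inner ℝ (hasDerivAt_const t ys))
    have h2 := h1.sub_const (g ys)
    simp only [Lag]
    simpa [inner_zero_right] using h2
  have hLag2 : HasDerivAt (fun τ => Lag f g K xs (y τ))
      (⟪K xs, y' t⟫ - ⟪gradient g (y t), y' t⟫) t := by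
    have h1 := ((hasDerivAt_const t (K xs)).inner ℝ hyd).const_add (f xs)
    have h2 := h1.fun_sub (grad_comp_deriv hg hyd)
    simp only [Lag]
    simpa [inner_zero_left] using h2
  have hr : HasDerivAt (fun τ : ℝ => c / (2 * τ ^ p)) (c/2 * (-p * t^(-p-1))) t := by
    have h1 : HasDerivAt (fun τ : ℝ => c/2 * τ ^ (-p)) (c/2 * (-p * t^(-p-1))) t := by
      have := (hrp (-p)).const_mul (c/2)
      convert this using 3
    refine h1.congr_of_eventuallyEq ?_
    filter_upwards [eventually_gt_nhds ht0] with τ hτ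
    have hne : τ ^ p ≠ 0 := (Real.rpow_pos_of_pos hτ p).ne'
    rw [Real.rpow_neg hτ.le]
    field_simp
  have hNxy : HasDerivAt (fun τ => ‖x τ‖^2 + ‖y τ‖^2) (2*⟪x t, x' t⟫ + 2*⟪y t, y' t⟫) t :=
    (hasDerivAt_norm_sq hxd).add (hasDerivAt_norm_sq hyd)
  have hB := (hLag1.sub hLag2).add (hr.mul hNxy)
  have hU := ((hxd.sub_const xs).const_smul (α-1)).add ((hrp q).smul (hxd2.add (hGx.const_smul γ)))
  have hUsq := (hasDerivAt_norm_sq hU).const_mul ((1:ℝ)/2)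
  have hwc : HasDerivAt (fun τ : ℝ => (α-1)/2 * (1 - q * τ^(q-1)))
      ((α-1)/2 * (0 - q * ((q-1) * t^(q-1-1)))) t :=
    (((hasDerivAt_const t (1:ℝ)).sub ((hrp (q-1)).const_mul q)).const_mul ((α-1)/2))
  have hS3 := hwc.mul (hasDerivAt_norm_sq (hxd.sub_const xs))
  have hV := ((hyd.sub_const ys).const_smul (α-1)).add ((hrp q).smul (hyd2.sub (hGy.const_smul γ)))
  have hVsq := (hasDerivAt_norm_sq hV).const_mul ((1:ℝ)/2)
  have hS5 := hwc.mul (hasDerivAt_norm_sq (hyd.sub_const ys))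
  have hEd := ((((hA.mul hB).add hUsq).add hS3).add hVsq).add hS5
  have hE't : E' t = _ := (hE' t htt₀).unique hEd
  -- scalar power identities
  have hq0' : t^q ≠ 0 := (Real.rpow_pos_of_pos ht0 q).ne'
  have e1 : t^q * t^(q+s) = t^(2*q+s) := by
    rw [← Real.rpow_add ht0]; congr 1; ring
  have e2 : t^q * t^(q-1) = t^(2*q-1) := by
    rw [← Real.rpow_add ht0]; congr 1; ring
  have hDpos : 0 < t^(q+s) - γ*q*t^(q-1) := by
    have h1 : (0:ℝ) < t^(q+s) := Real.rpow_pos_of_pos ht0 _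
    linarith
  have hθ : theta α q γ s t * ((α-1) * (t^(q+s) - γ*q*t^(q-1)))
      = t^q * t^(q+s) - 2*γ*q*(t^q * t^(q-1)) + γ*t^q := by
    rw [e1, e2, theta, div_mul_cancel₀]
    exact mul_ne_zero (by linarith) hDpos.ne'
  -- vector ODE substitutions
  have hodeX : t^q • (x'' t + γ • Gx' t)
      = (-α) • x' t - t^(q+s) • gradLx f K c p t (x t) (y t + theta α q γ s t • y' t) := by
    have h0 := hsol.heqx t htt₀
    have h1 : x'' t + γ • Gx' t
        = -((α / t^q) • x' t) - t^s • gradLx f K c p t (x t) (y t + theta α q γ s t • y' t) := by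
      have h2 : x'' t + γ • Gx' t
          = (x'' t + (α / t ^ q) • x' t + γ • Gx' t
              + t ^ s • gradLx f K c p t (x t) (y t + theta α q γ s t • y' t))
            - (α / t^q) • x' t
            - t^s • gradLx f K c p t (x t) (y t + theta α q γ s t • y' t) := by module
      rw [h2, h0]
      module
    rw [h1, smul_sub, smul_neg, smul_smul, smul_smul,
      show t^q * (α / t^q) = α from by field_simp, ← Real.rpow_add ht0]
    module
  have hodeY : t^q • (y'' t - γ • Gy' t)
      = (-α) • y' t + t^(q+s) • gradLy g K c p t (x t + theta α q γ s t • x' t) (y t) := by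
    have h0 := hsol.heqy t htt₀
    have h1 : y'' t - γ • Gy' t
        = -((α / t^q) • y' t) + t^s • gradLy g K c p t (x t + theta α q γ s t • x' t) (y t) := by
      have h2 : y'' t - γ • Gy' t
          = (y'' t + (α / t ^ q) • y' t - γ • Gy' t
              - t ^ s • gradLy g K c p t (x t + theta α q γ s t • x' t) (y t))
            - (α / t^q) • y' t
            + t^s • gradLy g K c p t (x t + theta α q γ s t • x' t) (y t) := by module
      rw [h2, h0]
      module
    rw [h1, smul_add, smul_neg, smul_smul, smul_smul,
      show t^q * (α / t^q) = α from by field_simp, ← Real.rpow_add ht0]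
    module
  have hGXexp : gradLx f K c p t (x t) (y t + theta α q γ s t • y' t)
      = gradient f (x t) + ((ContinuousLinearMap.adjoint K) (y t)
          + theta α q γ s t • (ContinuousLinearMap.adjoint K) (y' t)) + (c / t ^ p) • x t := by
    simp only [gradLx, map_add, _root_.map_smul]
  have hGYexp : gradLy g K c p t (x t + theta α q γ s t • x' t) (y t)
      = -(gradient g (y t)) + (K (x t) + theta α q γ s t • K (x' t)) - (c / t ^ p) • y t := by
    simp only [gradLy, map_add, _root_.map_smul]
  -- the key algebraic identity
  have key : E' t =
      ((2*q+s)*t^(2*q+s-1) - (2*γ*q)*((2*q-1)*t^(2*q-1-1)) + γ*(q*t^(q-1))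
          - (α-1)*(t^(q+s) - γ*q*t^(q-1)))
        * (Lag f g K (x t) ys - Lag f g K xs (y t))
      + (((2*q+s)*t^(2*q+s-1) - (2*γ*q)*((2*q-1)*t^(2*q-1-1)) + γ*(q*t^(q-1))) * (c/(2*t^p))
          + (t^(2*q+s) - 2*γ*q*t^(2*q-1) + γ*t^q) * (c/2*(-p*t^(-p-1)))
          - (α-1)*(t^(q+s) - γ*q*t^(q-1))*(c/(2*t^p))) * (‖x t‖^2 + ‖y t‖^2)
      + (α-1)*(t^(q+s) - γ*q*t^(q-1))*(c/(2*t^p)) * (‖xs‖^2 + ‖ys‖^2)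
      + ((α-1)/2*(q*((1-q)*t^(q-1-1))) - (α-1)*(t^(q+s) - γ*q*t^(q-1))*(c/(2*t^p)))
          * (‖x t - xs‖^2 + ‖y t - ys‖^2)
      - (α-1)*(t^(q+s) - γ*q*t^(q-1))
          * ((⟪gradient f (x t), x t - xs⟫ - (f (x t) - f xs))
            + (⟪gradient g (y t), y t - ys⟫ - (g (y t) - g ys)))
      + t^q*(q*t^(q-1)-1)*(⟪x' t, x' t⟫ + ⟪y' t, y' t⟫)
      - γ*t^q*(t^(q+s) - γ*q*t^(q-1))
          * (⟪gradLx f K c p t (x t) (y t + theta α q γ s t • y' t),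
              gradLx f K c p t (x t) (y t + theta α q γ s t • y' t)⟫
            + ⟪gradLy g K c p t (x t + theta α q γ s t • x' t) (y t),
              gradLy g K c p t (x t + theta α q γ s t • x' t) (y t)⟫) := by
    rw [hE't]
    beta_reduce
    simp only [Pi.add_apply, Pi.sub_apply, Pi.smul_apply, Pi.smul_apply', Pi.mul_apply]
    rw [hodeX, hodeY, hGXexp, hGYexp, ← e1, ← e2]
    simp only [Lag, ← real_inner_self_eq_norm_sq]
    simp only [map_add, map_sub, _root_.map_smul, map_neg,
      inner_add_left, inner_add_right, inner_sub_left, inner_sub_right,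
      inner_neg_left, inner_neg_right, real_inner_smul_left, real_inner_smul_right,
      ContinuousLinearMap.adjoint_inner_left, ContinuousLinearMap.adjoint_inner_right]
    simp only [real_inner_comm (x' t) (gradient f (x t)),
      real_inner_comm (x t) (gradient f (x t)), real_inner_comm xs (gradient f (x t)),
      real_inner_comm (x' t) (x t), real_inner_comm xs (x t), real_inner_comm xs (x' t),
      real_inner_comm (y' t) (gradient g (y t)),
      real_inner_comm (y t) (gradient g (y t)), real_inner_comm ys (gradient g (y t)),
      real_inner_comm (y' t) (y t), real_inner_comm ys (y t), real_inner_comm ys (y' t),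
      real_inner_comm (y t) (K (x t)), real_inner_comm (y' t) (K (x t)),
      real_inner_comm ys (K (x t)), real_inner_comm (y t) (K xs),
      real_inner_comm (y' t) (K xs), real_inner_comm ys (K xs),
      real_inner_comm (y t) (K (x' t)), real_inner_comm (y' t) (K (x' t)),
      real_inner_comm ys (K (x' t))]
    have hKK : ⟪K ((ContinuousLinearMap.adjoint K) (y t)), y' t⟫
        = ⟪y t, K ((ContinuousLinearMap.adjoint K) (y' t))⟫ := by
      rw [← ContinuousLinearMap.adjoint_inner_left K ((ContinuousLinearMap.adjoint K) (y' t)) (y t)]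
      rw [real_inner_comm]
      rw [← ContinuousLinearMap.adjoint_inner_left K ((ContinuousLinearMap.adjoint K) (y t)) (y' t)]
      rw [real_inner_comm]
    set_option maxRecDepth 100000 in
    linear_combination (⟪y' t, K xs⟫ + ⟪y t, K (x' t)⟫ - ⟪ys, K (x' t)⟫ - ⟪y' t, K (x t)⟫) * hθ
      - (γ*t^q*(t^(q+s) - γ*q*t^(q-1))*theta α q γ s t) * hKK
  rw [key]
  have htp : (0:ℝ) < t^p := Real.rpow_pos_of_pos ht0 _
  have hrpos : (0:ℝ) < c/(2*t^p) := by positivity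
  have htq : (0:ℝ) < t^q := Real.rpow_pos_of_pos ht0 _
  have ht2qs : (0:ℝ) ≤ t^(2*q+s) := (Real.rpow_pos_of_pos ht0 _).le
  have htpm1 : (0:ℝ) ≤ t^(-p-1) := Real.rpow_nonneg ht0.le _
  have htq1 : (0:ℝ) ≤ t^(q-1) := Real.rpow_nonneg ht0.le _
  have hSL : 0 ≤ Lag f g K (x t) ys - Lag f g K xs (y t) := by
    have h1 := (hsad (x t) (y t)).1
    have h2 := (hsad (x t) (y t)).2
    linarith
  have hT1 : ((2*q+s)*t^(2*q+s-1) - (2*γ*q)*((2*q-1)*t^(2*q-1-1)) + γ*(q*t^(q-1))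
      - (α-1)*(t^(q+s) - γ*q*t^(q-1))) * (Lag f g K (x t) ys - Lag f g K xs (y t)) ≤ 0 :=
    mul_nonpos_iff.mpr (Or.inr ⟨by linarith, hSL⟩)
  have hA0 : 0 ≤ t^(2*q+s) - 2*γ*q*t^(2*q-1) + γ*t^q := by
    have h1 : (0:ℝ) ≤ γ*t^q := by positivity
    linarith
  have hT2 : (((2*q+s)*t^(2*q+s-1) - (2*γ*q)*((2*q-1)*t^(2*q-1-1)) + γ*(q*t^(q-1))) * (c/(2*t^p))
      + (t^(2*q+s) - 2*γ*q*t^(2*q-1) + γ*t^q) * (c/2*(-p*t^(-p-1)))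
      - (α-1)*(t^(q+s) - γ*q*t^(q-1))*(c/(2*t^p))) * (‖x t‖^2 + ‖y t‖^2) ≤ 0 := by
    have h1 : ((2*q+s)*t^(2*q+s-1) - (2*γ*q)*((2*q-1)*t^(2*q-1-1)) + γ*(q*t^(q-1))) * (c/(2*t^p))
        ≤ (α-1)*(t^(q+s) - γ*q*t^(q-1))*(c/(2*t^p)) :=
      mul_le_mul_of_nonneg_right cond1 hrpos.le
    have h2 : (t^(2*q+s) - 2*γ*q*t^(2*q-1) + γ*t^q) * (c/2*(-p*t^(-p-1))) ≤ 0 := by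
      apply mul_nonpos_iff.mpr (Or.inl ⟨hA0, ?_⟩)
      have h3 : (0:ℝ) ≤ c/2*(p*t^(-p-1)) := by positivity
      nlinarith
    exact mul_nonpos_iff.mpr (Or.inr ⟨by linarith, by positivity⟩)
  have key2 : (α-1)*(t^(q+s) - γ*q*t^(q-1))*(c/(2*t^p))
      = (α-1)/2*(c*t^(q+s-p) - c*γ*q*t^(q-1-p)) := by
    rw [Real.rpow_sub ht0 (q+s) p, Real.rpow_sub ht0 (q-1) p]
    field_simp
  have hT4coef : (α-1)/2*(q*((1-q)*t^(q-1-1)))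
      - (α-1)*(t^(q+s) - γ*q*t^(q-1))*(c/(2*t^p)) ≤ 0 := by
    have hid3 : t^(q-1-1) = t^(q-2) := by congr 1; ring
    have h5 : q*(1-q)*t^(q-2) ≤ c*t^(q+s-p) - c*γ*q*t^(q-1-p) := by linarith
    have h6 := mul_le_mul_of_nonneg_left h5 (show (0:ℝ) ≤ (α-1)/2 by linarith)
    rw [key2, hid3]
    linarith
  have hT4 : ((α-1)/2*(q*((1-q)*t^(q-1-1)))
      - (α-1)*(t^(q+s) - γ*q*t^(q-1))*(c/(2*t^p))) * (‖x t - xs‖^2 + ‖y t - ys‖^2) ≤ 0 :=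
    mul_nonpos_iff.mpr (Or.inr ⟨hT4coef, by positivity⟩)
  have hRf : 0 ≤ ⟪gradient f (x t), x t - xs⟫ - (f (x t) - f xs) := by
    have h1 := grad_ineq hf hfc (x t) xs
    have h2 : ⟪gradient f (x t), xs - x t⟫ = -⟪gradient f (x t), x t - xs⟫ := by
      rw [show xs - x t = -(x t - xs) from (neg_sub _ _).symm, inner_neg_right]
    linarith
  have hRg : 0 ≤ ⟪gradient g (y t), y t - ys⟫ - (g (y t) - g ys) := by
    have h1 := grad_ineq hg hgc (y t) ys
    have h2 : ⟪gradient g (y t), ys - y t⟫ = -⟪gradient g (y t), y t - ys⟫ := by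
      rw [show ys - y t = -(y t - ys) from (neg_sub _ _).symm, inner_neg_right]
    linarith
  have hT5 : 0 ≤ (α-1)*(t^(q+s) - γ*q*t^(q-1))
      * ((⟪gradient f (x t), x t - xs⟫ - (f (x t) - f xs))
        + (⟪gradient g (y t), y t - ys⟫ - (g (y t) - g ys))) :=
    mul_nonneg (mul_nonneg (by linarith) hDpos.le) (by linarith)
  have hqt1 : q*t^(q-1) ≤ 1 := by
    have h1 : t^(q-1) ≤ 1 := Real.rpow_le_one_of_one_le_of_nonpos ht1 (by linarith)
    have h2 := mul_le_mul_of_nonneg_left h1 hq0.le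
    linarith
  have hT6 : t^q*(q*t^(q-1)-1)*(⟪x' t, x' t⟫ + ⟪y' t, y' t⟫) ≤ 0 := by
    have h1 : (0:ℝ) ≤ ⟪x' t, x' t⟫ + ⟪y' t, y' t⟫ :=
      add_nonneg real_inner_self_nonneg real_inner_self_nonneg
    have h2 : t^q*(q*t^(q-1)-1) ≤ 0 := mul_nonpos_iff.mpr (Or.inl ⟨htq.le, by linarith⟩)
    exact mul_nonpos_iff.mpr (Or.inr ⟨h2, h1⟩)
  have hT7 : 0 ≤ γ*t^q*(t^(q+s) - γ*q*t^(q-1))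
      * (⟪gradLx f K c p t (x t) (y t + theta α q γ s t • y' t),
          gradLx f K c p t (x t) (y t + theta α q γ s t • y' t)⟫
        + ⟪gradLy g K c p t (x t + theta α q γ s t • x' t) (y t),
          gradLy g K c p t (x t + theta α q γ s t • x' t) (y t)⟫) :=
    mul_nonneg (mul_nonneg (mul_nonneg hγ.le htq.le) hDpos.le)
      (add_nonneg real_inner_self_nonneg real_inner_self_nonneg)
  have hT3 : (α-1)*(t^(q+s) - γ*q*t^(q-1))*(c/(2*t^p)) * (‖xs‖^2 + ‖ys‖^2)
      ≤ (α-1)*c/2*t^(q+s-p) * (‖xs‖^2 + ‖ys‖^2) := by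
    apply mul_le_mul_of_nonneg_right _ (by positivity)
    have hgq : (0:ℝ) ≤ γ*q*t^(q-1) := by positivity
    calc (α-1)*(t^(q+s) - γ*q*t^(q-1))*(c/(2*t^p))
        ≤ (α-1)*t^(q+s)*(c/(2*t^p)) := by
          apply mul_le_mul_of_nonneg_right _ hrpos.le
          exact mul_le_mul_of_nonneg_left (by linarith) (by linarith)
      _ = (α-1)*c/2*t^(q+s-p) := by
          rw [Real.rpow_sub ht0 (q+s) p]
          field_simp
  linarith [hT1, hT2, hT4, hT5, hT6, hT7, hT3]
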